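/- arXiv:2412.19004 — 3 statements merged into one kernel-verified Lean document; each statement's English description precedes it below -/
import Mathlib

section
/- Let H be a real Hilbert space, C : H →L[ℝ] H a compact positive self-adjoint operator with orthonormal eigenbasis (ζᵢ) and eigenvalues λᵢ ≥ 0, and let α > 0. Then for any x ∈ H, the unique minimizer of y ↦ ‖C^{1/2} y - x‖² + α ‖y‖² is y* = ∑ᵢ (√λᵢ / (λᵢ + α)) ⟨ζᵢ, x⟩ ζᵢ. -/
open scoped RealInnerProductSpace ENNReal

/-- Existence of the sum `∑ cᵢ • ζᵢ` for square-summable coefficients, via the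
Hilbert basis determined by `ζ`. -/
lemma aux_exists_hasSum {H : Type*} [NormedAddCommGroup H] [InnerProductSpace ℝ H]
    [CompleteSpace H] (ζ : ℕ → H) (hon : Orthonormal ℝ ζ)
    (hbasis : (Submodule.span ℝ (Set.range ζ)).topologicalClosure = ⊤)
    (c : ℕ → ℝ) (hc : Summable (fun i => c i ^ 2)) :
    ∃ v, HasSum (fun i => c i • ζ i) v := by
  have hmem : Memℓp c 2 := by
    apply memℓp_gen
    have : (fun i => ‖c i‖ ^ (2 : ℝ≥0∞).toReal) = fun i => c i ^ 2 := by
      ext i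
      rw [ENNReal.toReal_ofNat, Real.rpow_two, Real.norm_eq_abs, sq_abs]
    rw [this]; exact hc
  let b : HilbertBasis ℕ ℝ H := HilbertBasis.mk hon hbasis.ge
  have hbcoe : ⇑b = ζ := HilbertBasis.coe_mk hon hbasis.ge
  refine ⟨b.repr.symm ⟨c, hmem⟩, ?_⟩
  have h := b.hasSum_repr_symm ⟨c, hmem⟩
  have h2 : (fun i => (⟨c, hmem⟩ : lp (fun _ : ℕ => ℝ) 2) i • b i) = fun i => c i • ζ i := by
    ext i; rw [hbcoe]
  rwa [h2] at h

/-- Coefficient extraction from a sum `∑ cᵢ • ζᵢ`. -/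
lemma aux_inner_of_hasSum {H : Type*} [NormedAddCommGroup H] [InnerProductSpace ℝ H]
    (ζ : ℕ → H) (hon : Orthonormal ℝ ζ) (c : ℕ → ℝ) (v : H)
    (hv : HasSum (fun i => c i • ζ i) v) (j : ℕ) : ⟪ζ j, v⟫ = c j := by
  have h2 := (innerSL ℝ (ζ j)).hasSum hv
  have h3 : (fun i => (innerSL ℝ (ζ j)) (c i • ζ i)) = fun i => if i = j then c j else 0 := by
    ext i
    rcases eq_or_ne i j with h | h
    · subst h; simp [real_inner_smul_right, real_inner_self_eq_norm_sq, hon.1 i]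
    · simp [real_inner_smul_right, hon.2 (Ne.symm h), h]
  rw [h3] at h2
  have h4 : HasSum (fun i => if i = j then c j else 0) (c j) := hasSum_ite_eq j (c j)
  exact h2.unique h4

/-- Corollary 1: explicit form of the α-standardization.  For a compact positive
self-adjoint operator `C` with orthonormal eigenbasis `ζ` and eigenvalues `λᵢ ≥ 0`,
and `C^{1/2}` defined spectrally, the unique minimizer of
`y ↦ ‖C^{1/2} y - x‖² + α ‖y‖²` is `y* = ∑ᵢ (√λᵢ/(λᵢ+α)) ⟨ζᵢ, x⟩ ζᵢ`. -/
theorem alpha_standardization_explicit_form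
    {H : Type*} [NormedAddCommGroup H] [InnerProductSpace ℝ H] [CompleteSpace H]
    (C S : H →L[ℝ] H) (hCcompact : IsCompactOperator C)
    (hCpos : C.IsPositive) (hCsa : IsSelfAdjoint C)
    (ζ : ℕ → H) (lam : ℕ → ℝ)
    (hon : Orthonormal ℝ ζ)
    (hbasis : (Submodule.span ℝ (Set.range ζ)).topologicalClosure = ⊤)
    (heig : ∀ i, C (ζ i) = lam i • ζ i) (hnn : ∀ i, 0 ≤ lam i)
    (hS : ∀ y : H, S y = ∑' i, (Real.sqrt (lam i) * ⟪ζ i, y⟫) • ζ i)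
    (α : ℝ) (hα : 0 < α) (x : H) :
    (∀ z : H,
        ‖S (∑' i, (Real.sqrt (lam i) / (lam i + α) * ⟪ζ i, x⟫) • ζ i) - x‖ ^ 2
          + α * ‖∑' i, (Real.sqrt (lam i) / (lam i + α) * ⟪ζ i, x⟫) • ζ i‖ ^ 2
        ≤ ‖S z - x‖ ^ 2 + α * ‖z‖ ^ 2) ∧
    (∀ y : H, (∀ z : H, ‖S y - x‖ ^ 2 + α * ‖y‖ ^ 2 ≤ ‖S z - x‖ ^ 2 + α * ‖z‖ ^ 2) →
      y = ∑' i, (Real.sqrt (lam i) / (lam i + α) * ⟪ζ i, x⟫) • ζ i) := by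
  -- eigenvalues are bounded by ‖C‖
  have hlam_le : ∀ i, lam i ≤ ‖C‖ := by
    intro i
    have h1 : ⟪ζ i, C (ζ i)⟫ = lam i := by
      rw [heig i, real_inner_smul_right, real_inner_self_eq_norm_sq, hon.1 i]
      simp
    calc lam i = ⟪ζ i, C (ζ i)⟫ := h1.symm
      _ ≤ ‖ζ i‖ * ‖C (ζ i)‖ := real_inner_le_norm _ _
      _ ≤ ‖ζ i‖ * (‖C‖ * ‖ζ i‖) := by
          gcongr; exact C.le_opNorm _
      _ = ‖C‖ := by rw [hon.1 i]; ring
  -- the denominators are positive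
  have hden : ∀ i, 0 < lam i + α := fun i => by have := hnn i; linarith
  -- Bessel: inner products with any vector are square-summable
  have hbes : ∀ u : H, Summable (fun i => ⟪ζ i, u⟫ ^ 2) := by
    intro u
    have := hon.inner_products_summable (x := u)
    simpa [Real.norm_eq_abs, sq_abs] using this
  -- S acts diagonally with actual convergence
  have hSsum : ∀ u : H, HasSum (fun i => (Real.sqrt (lam i) * ⟪ζ i, u⟫) • ζ i) (S u) := by
    intro u
    have hsq : Summable (fun i => (Real.sqrt (lam i) * ⟪ζ i, u⟫) ^ 2) := by
      apply Summable.of_nonneg_of_le (fun i => sq_nonneg _)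
        (fun i => ?_) ((hbes u).mul_left ‖C‖)
      rw [mul_pow, Real.sq_sqrt (hnn i)]
      have := sq_nonneg (⟪ζ i, u⟫)
      nlinarith [hlam_le i]
    obtain ⟨v, hv⟩ := aux_exists_hasSum ζ hon hbasis _ hsq
    rwa [hS u, hv.tsum_eq]
  have hSinner : ∀ (u : H) (j : ℕ), ⟪ζ j, S u⟫ = Real.sqrt (lam j) * ⟪ζ j, u⟫ :=
    fun u j => aux_inner_of_hasSum ζ hon _ _ (hSsum u) j
  -- S is self-adjoint
  have hSsa : ∀ u v : H, ⟪S u, v⟫ = ⟪u, S v⟫ := by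
    intro u v
    have h1 := (innerSL ℝ v).hasSum (hSsum u)
    have h2 := (innerSL ℝ u).hasSum (hSsum v)
    have e1 : (fun i => (innerSL ℝ v) ((Real.sqrt (lam i) * ⟪ζ i, u⟫) • ζ i))
        = fun i => (innerSL ℝ u) ((Real.sqrt (lam i) * ⟪ζ i, v⟫) • ζ i) := by
      ext i
      simp only [innerSL_apply_apply, real_inner_smul_right]
      rw [real_inner_comm v (ζ i), real_inner_comm u (ζ i)]
      rw [real_inner_comm (ζ i) u, real_inner_comm (ζ i) v]
      ring
    rw [e1] at h1
    have := h1.unique h2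
    rw [real_inner_comm]
    simpa using this
  -- the candidate minimizer
  set c : ℕ → ℝ := fun i => Real.sqrt (lam i) / (lam i + α) * ⟪ζ i, x⟫ with hcdef
  have hc2 : Summable (fun i => c i ^ 2) := by
    apply Summable.of_nonneg_of_le (fun i => sq_nonneg _)
      (fun i => ?_) ((hbes x).mul_left (1/α))
    have hpos := hden i
    have h1 : c i ^ 2 = lam i / (lam i + α) ^ 2 * ⟪ζ i, x⟫ ^ 2 := by
      rw [hcdef]; simp only
      rw [mul_pow, div_pow, Real.sq_sqrt (hnn i)]
    rw [h1]
    have h2 : lam i / (lam i + α) ^ 2 ≤ 1 / α := by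
      rw [div_le_div_iff₀ (by positivity) hα]
      nlinarith [hnn i]
    nlinarith [sq_nonneg (⟪ζ i, x⟫)]
  obtain ⟨ystar, hystar⟩ := aux_exists_hasSum ζ hon hbasis c hc2
  have htsum : (∑' i, (Real.sqrt (lam i) / (lam i + α) * ⟪ζ i, x⟫) • ζ i) = ystar :=
    hystar.tsum_eq
  have hyc : ∀ j, ⟪ζ j, ystar⟫ = c j := fun j => aux_inner_of_hasSum ζ hon c ystar hystar j
  -- normal equation: S (S ystar) + α • ystar = S x
  have hnorm : S (S ystar) + α • ystar = S x := by
    have hA : HasSum (fun i => (Real.sqrt (lam i) * (Real.sqrt (lam i) * c i)) • ζ i)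
        (S (S ystar)) := by
      have := hSsum (S ystar)
      have e : (fun i => (Real.sqrt (lam i) * ⟪ζ i, S ystar⟫) • ζ i)
          = fun i => (Real.sqrt (lam i) * (Real.sqrt (lam i) * c i)) • ζ i := by
        ext i; rw [hSinner ystar i, hyc i]
      rwa [e] at this
    have hB : HasSum (fun i => (α * c i) • ζ i) (α • ystar) := by
      have := hystar.const_smul α
      have e : (fun i => α • (c i • ζ i)) = fun i => (α * c i) • ζ i := by
        ext i; rw [smul_smul]
      rwa [e] at this
    have hAB := hA.add hB
    have e2 : (fun i => (Real.sqrt (lam i) * (Real.sqrt (lam i) * c i)) • ζ i + (α * c i) • ζ i)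
        = fun i => (Real.sqrt (lam i) * ⟪ζ i, x⟫) • ζ i := by
      ext i
      rw [← add_smul]
      congr 1
      rw [hcdef]; simp only
      rw [← mul_assoc, Real.mul_self_sqrt (hnn i)]
      field_simp [(hden i).ne']
    rw [e2] at hAB
    exact hAB.unique (hSsum x)
  -- the cross term vanishes
  have hcross : ∀ w : H, ⟪S ystar - x, S w⟫ + α * ⟪ystar, w⟫ = 0 := by
    intro w
    have h1 : ⟪S ystar - x, S w⟫ = ⟪S (S ystar - x), w⟫ := (hSsa (S ystar - x) w).symm
    have h2 : S (S ystar - x) + α • ystar = 0 := by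
      rw [map_sub]
      have : S x = S (S ystar) + α • ystar := hnorm.symm
      rw [this]; abel
    rw [h1, ← real_inner_smul_left, ← inner_add_left, h2, inner_zero_left]
  -- expansion of the objective
  have hexp : ∀ z : H, ‖S z - x‖ ^ 2 + α * ‖z‖ ^ 2
      = (‖S ystar - x‖ ^ 2 + α * ‖ystar‖ ^ 2)
        + (‖S (z - ystar)‖ ^ 2 + α * ‖z - ystar‖ ^ 2) := by
    intro z
    have e1 : ‖S z - x‖ ^ 2 = ‖S ystar - x‖ ^ 2
        + 2 * ⟪S ystar - x, S (z - ystar)⟫ + ‖S (z - ystar)‖ ^ 2 := by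
      have hz1 : S z - x = (S ystar - x) + S (z - ystar) := by rw [map_sub]; abel
      rw [hz1, norm_add_sq_real]
    have e2 : ‖z‖ ^ 2 = ‖ystar‖ ^ 2 + 2 * ⟪ystar, z - ystar⟫ + ‖z - ystar‖ ^ 2 := by
      rw [show (‖z‖ : ℝ) = ‖ystar + (z - ystar)‖ from by
        rw [show ystar + (z - ystar) = z from by abel]]
      rw [norm_add_sq_real]
    have key := hcross (z - ystar)
    rw [e1, e2]
    ring_nf
    nlinarith [key]
  constructor
  · intro z
    rw [htsum]
    rw [hexp z]
    have h1 : 0 ≤ ‖S (z - ystar)‖ ^ 2 + α * ‖z - ystar‖ ^ 2 := by positivity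
    linarith
  · intro y hy
    rw [htsum]
    have h1 := hy ystar
    have h2 := hexp y
    have h3 : ‖S (y - ystar)‖ ^ 2 + α * ‖y - ystar‖ ^ 2 ≤ 0 := by linarith
    have h4 : ‖y - ystar‖ ^ 2 ≤ 0 := by nlinarith [sq_nonneg ‖S (y - ystar)‖]
    have h5 : ‖y - ystar‖ = 0 := by nlinarith [norm_nonneg (y - ystar)]
    have := norm_eq_zero.mp h5
    rwa [sub_eq_zero] at this
end

section
/- Let H be a real Hilbert space, C : H →L[ℝ] H a compact positive self-adjoint operator with orthonormal eigenbasis (ζᵢ)_{i≥1} and nonincreasing eigenvalues λᵢ > 0 satisfying λ_k > λ_{k+1}, and let W be the orthogonal projection onto the closed complement of span{ζ₁,…,ζ_k}. Then for α > 0 and x ∈ H, the unique minimizer of y ↦ ‖C^{1/2} y - x‖² + α ‖W y‖² is y* = ∑_{i=1}^{k} λᵢ^{-1/2} ⟨x, ζᵢ⟩ ζᵢ + ∑_{i>k} (√λᵢ / (λᵢ + α)) ⟨x, ζᵢ⟩ ζᵢ. -/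
open scoped RealInnerProductSpace ENNReal

section RSXAux

variable {H : Type*} [NormedAddCommGroup H] [InnerProductSpace ℝ H] [CompleteSpace H]

omit [CompleteSpace H] in
lemma rsx_parseval (b : HilbertBasis ℕ ℝ H) (u : H) :
    HasSum (fun i => ⟪b i, u⟫ ^ 2) (‖u‖ ^ 2) := by
  have h := b.hasSum_inner_mul_inner u u
  rw [real_inner_self_eq_norm_sq] at h
  refine h.congr_fun fun i => ?_
  rw [real_inner_comm u (b i)]; ring

lemma rsx_reconstruct (b : HilbertBasis ℕ ℝ H) (f : ℕ → ℝ)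
    (hf : Summable (fun i => f i ^ 2)) (j : ℕ) :
    ⟪b j, ∑' i, f i • b i⟫ = f j := by
  have hmem : Memℓp f 2 := by
    apply memℓp_gen
    have h2 : ∀ i, ‖f i‖ ^ (2 : ℝ≥0∞).toReal = f i ^ 2 := by
      intro i
      rw [show ((2 : ℝ≥0∞).toReal) = ((2 : ℕ) : ℝ) by norm_num, Real.rpow_natCast,
        Real.norm_eq_abs, sq_abs]
    simpa only [h2] using hf
  have hs : HasSum (fun i => f i • b i) (b.repr.symm ⟨f, hmem⟩) :=
    b.hasSum_repr_symm ⟨f, hmem⟩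
  rw [hs.tsum_eq]
  have h := b.repr_apply_apply (b.repr.symm ⟨f, hmem⟩) j
  rw [LinearIsometryEquiv.apply_symm_apply] at h
  exact h ▸ rfl

end RSXAux

/-- Proposition 3 (explicit solution): with `W` the orthogonal projection onto the
complement of the span of the first `k` eigenfunctions, the unique minimizer of
`y ↦ ‖C^{1/2} y - x‖² + α ‖W y‖²` whitens the first `k` components fully and
Tikhonov-regularizes the rest. -/
theorem regularized_standardization_projector_explicit
    {H : Type*} [NormedAddCommGroup H] [InnerProductSpace ℝ H] [CompleteSpace H]
    (C S W : H →L[ℝ] H) (hCcompact : IsCompactOperator C)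
    (hCpos : C.IsPositive) (hCsa : IsSelfAdjoint C)
    (ζ : ℕ → H) (lam : ℕ → ℝ) (k : ℕ)
    (hon : Orthonormal ℝ ζ)
    (hbasis : (Submodule.span ℝ (Set.range ζ)).topologicalClosure = ⊤)
    (heig : ∀ i, C (ζ i) = lam i • ζ i)
    (hpos : ∀ i, 0 < lam i) (hmono : Antitone lam)
    (hgap : lam (k + 1) < lam k)
    (hS : ∀ y : H, S y = ∑' i, (Real.sqrt (lam i) * ⟪ζ i, y⟫) • ζ i)
    (hW : ∀ y : H, W y = y - ∑ i ∈ Finset.range k, ⟪ζ i, y⟫ • ζ i)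
    (α : ℝ) (hα : 0 < α) (x : H) :
    letI ystar : H := ∑' i, ((if i < k then (Real.sqrt (lam i))⁻¹
        else Real.sqrt (lam i) / (lam i + α)) * ⟪x, ζ i⟫) • ζ i
    (∀ z : H, ‖S ystar - x‖ ^ 2 + α * ‖W ystar‖ ^ 2
        ≤ ‖S z - x‖ ^ 2 + α * ‖W z‖ ^ 2) ∧
    (∀ y : H, (∀ z : H, ‖S y - x‖ ^ 2 + α * ‖W y‖ ^ 2
        ≤ ‖S z - x‖ ^ 2 + α * ‖W z‖ ^ 2) → y = ystar) := by
  classical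
  let b : HilbertBasis ℕ ℝ H := HilbertBasis.mk hon hbasis.ge
  have hbζ : ∀ i, b i = ζ i := fun i =>
    congrFun (HilbertBasis.coe_mk hon hbasis.ge) i
  have parseval : ∀ u : H, HasSum (fun i => ⟪ζ i, u⟫ ^ 2) (‖u‖ ^ 2) := fun u => by
    simpa only [hbζ] using rsx_parseval b u
  have sq_sum : ∀ u : H, Summable (fun i => ⟪ζ i, u⟫ ^ 2) := fun u => (parseval u).summable
  have reconstruct : ∀ (f : ℕ → ℝ), Summable (fun i => f i ^ 2) →
      ∀ j, ⟪ζ j, ∑' i, f i • ζ i⟫ = f j := fun f hf j => by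
    simpa only [hbζ] using rsx_reconstruct b f hf j
  have lam0 : ∀ i, lam i ≤ lam 0 := fun i => hmono (Nat.zero_le i)
  -- coordinates of S y
  have Scoord : ∀ (y : H) (j : ℕ), ⟪ζ j, S y⟫ = Real.sqrt (lam j) * ⟪ζ j, y⟫ := by
    intro y j
    rw [hS y]
    refine reconstruct _ ?_ j
    refine Summable.of_nonneg_of_le (fun i => sq_nonneg _) (fun i => ?_)
      ((sq_sum y).mul_left (lam 0))
    have h1 : (Real.sqrt (lam i) * ⟪ζ i, y⟫) ^ 2 = lam i * ⟪ζ i, y⟫ ^ 2 := by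
      rw [mul_pow, Real.sq_sqrt (hpos i).le]
    rw [h1]
    exact mul_le_mul_of_nonneg_right (lam0 i) (sq_nonneg _)
  -- coordinates of W y
  have Wcoord : ∀ (y : H) (j : ℕ), ⟪ζ j, W y⟫ = if j < k then 0 else ⟪ζ j, y⟫ := by
    intro y j
    have hortho := orthonormal_iff_ite.mp hon
    rw [hW y, inner_sub_right, inner_sum]
    simp only [real_inner_smul_right, hortho, mul_ite, mul_one, mul_zero,
      Finset.sum_ite_eq, Finset.mem_range]
    by_cases hjk : j < k <;> simp [hjk]
  -- bound on coefficients of ystar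
  have Mdef : ∀ i, (if i < k then (Real.sqrt (lam i))⁻¹
      else Real.sqrt (lam i) / (lam i + α)) ^ 2 ≤ max (lam k)⁻¹ (lam 0 / α ^ 2) := by
    intro i
    by_cases hik : i < k
    · rw [if_pos hik]
      have h1 : ((Real.sqrt (lam i))⁻¹) ^ 2 = (lam i)⁻¹ := by
        rw [← Real.sqrt_inv, Real.sq_sqrt (inv_nonneg.mpr (hpos i).le)]
      rw [h1]
      exact le_trans (inv_anti₀ (hpos k) (hmono hik.le)) (le_max_left _ _)
    · rw [if_neg hik]
      have h1 : (Real.sqrt (lam i) / (lam i + α)) ^ 2 = lam i / (lam i + α) ^ 2 := by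
        rw [div_pow, Real.sq_sqrt (hpos i).le]
      rw [h1]
      refine le_trans ?_ (le_max_right _ _)
      have h2 : α ^ 2 ≤ (lam i + α) ^ 2 := by nlinarith [hpos i, hα]
      exact div_le_div₀ (hpos 0).le (lam0 i) (by positivity) h2
  -- summability of the coefficients of ystar
  have hstar_sq : Summable (fun i => ((if i < k then (Real.sqrt (lam i))⁻¹
      else Real.sqrt (lam i) / (lam i + α)) * ⟪x, ζ i⟫) ^ 2) := by
    refine Summable.of_nonneg_of_le (fun i => sq_nonneg _) (fun i => ?_)
      ((sq_sum x).mul_left (max (lam k)⁻¹ (lam 0 / α ^ 2)))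
    rw [mul_pow, real_inner_comm x (ζ i)]
    exact mul_le_mul_of_nonneg_right (Mdef i) (sq_nonneg _)
  set Y : H := ∑' i, ((if i < k then (Real.sqrt (lam i))⁻¹
      else Real.sqrt (lam i) / (lam i + α)) * ⟪x, ζ i⟫) • ζ i with hYdef
  have Ycoord : ∀ j, ⟪ζ j, Y⟫ = (if j < k then (Real.sqrt (lam j))⁻¹
      else Real.sqrt (lam j) / (lam j + α)) * ⟪x, ζ j⟫ :=
    fun j => reconstruct _ hstar_sq j
  -- the objective as a sum over coordinates
  have hasSumF : ∀ y : H, HasSum (fun j => (Real.sqrt (lam j) * ⟪ζ j, y⟫ - ⟪ζ j, x⟫) ^ 2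
      + α * (if j < k then 0 else ⟪ζ j, y⟫) ^ 2) (‖S y - x‖ ^ 2 + α * ‖W y‖ ^ 2) := by
    intro y
    have h1 : HasSum (fun j => (Real.sqrt (lam j) * ⟪ζ j, y⟫ - ⟪ζ j, x⟫) ^ 2)
        (‖S y - x‖ ^ 2) := by
      refine (parseval (S y - x)).congr_fun fun j => ?_
      rw [inner_sub_right, Scoord y j]
    have h2 : HasSum (fun j => (if j < k then 0 else ⟪ζ j, y⟫) ^ 2) (‖W y‖ ^ 2) := by
      refine (parseval (W y)).congr_fun fun j => ?_
      rw [Wcoord y j]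
    exact h1.add (h2.mul_left α)
  -- pointwise key identity
  have key : ∀ (j : ℕ) (t : ℝ),
      (Real.sqrt (lam j) * t - ⟪ζ j, x⟫) ^ 2 + α * (if j < k then 0 else t) ^ 2
      = ((Real.sqrt (lam j) * ((if j < k then (Real.sqrt (lam j))⁻¹
            else Real.sqrt (lam j) / (lam j + α)) * ⟪x, ζ j⟫) - ⟪ζ j, x⟫) ^ 2
          + α * (if j < k then 0 else ((if j < k then (Real.sqrt (lam j))⁻¹
            else Real.sqrt (lam j) / (lam j + α)) * ⟪x, ζ j⟫)) ^ 2)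
        + (lam j + if j < k then 0 else α)
          * (t - (if j < k then (Real.sqrt (lam j))⁻¹
            else Real.sqrt (lam j) / (lam j + α)) * ⟪x, ζ j⟫) ^ 2 := by
    intro j t
    rw [real_inner_comm x (ζ j)]
    have hs2 : Real.sqrt (lam j) ^ 2 = lam j := Real.sq_sqrt (hpos j).le
    have hs0 : (0 : ℝ) < Real.sqrt (lam j) := Real.sqrt_pos.mpr (hpos j)
    by_cases hjk : j < k
    · simp only [if_pos hjk]
      rw [← hs2, Real.sqrt_sq hs0.le]
      field_simp
      ring
    · simp only [if_neg hjk]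
      have hd : (0 : ℝ) < lam j + α := by linarith [hpos j]
      rw [← hs2] at hd ⊢
      rw [Real.sqrt_sq hs0.le]
      field_simp
      ring
  -- difference identity
  have hdiff : ∀ y : H, HasSum (fun j => (lam j + if j < k then 0 else α)
      * (⟪ζ j, y⟫ - (if j < k then (Real.sqrt (lam j))⁻¹
          else Real.sqrt (lam j) / (lam j + α)) * ⟪x, ζ j⟫) ^ 2)
      ((‖S y - x‖ ^ 2 + α * ‖W y‖ ^ 2) - (‖S Y - x‖ ^ 2 + α * ‖W Y‖ ^ 2)) := by
    intro y
    refine ((hasSumF y).sub (hasSumF Y)).congr_fun fun j => ?_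
    rw [Ycoord j, key j ⟪ζ j, y⟫]
    ring
  have hdpos : ∀ j, (0 : ℝ) < lam j + if j < k then 0 else α := by
    intro j
    have := hpos j
    split <;> linarith
  have hnn : ∀ (y : H) (j : ℕ), (0 : ℝ) ≤ (lam j + if j < k then 0 else α)
      * (⟪ζ j, y⟫ - (if j < k then (Real.sqrt (lam j))⁻¹
          else Real.sqrt (lam j) / (lam j + α)) * ⟪x, ζ j⟫) ^ 2 :=
    fun y j => mul_nonneg (hdpos j).le (sq_nonneg _)
  have hmin : ∀ z : H, ‖S Y - x‖ ^ 2 + α * ‖W Y‖ ^ 2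
      ≤ ‖S z - x‖ ^ 2 + α * ‖W z‖ ^ 2 := by
    intro z
    have h0 := (hdiff z).nonneg (hnn z)
    linarith
  refine ⟨hmin, ?_⟩
  intro y hy
  have h := hdiff y
  have hle : (‖S y - x‖ ^ 2 + α * ‖W y‖ ^ 2) - (‖S Y - x‖ ^ 2 + α * ‖W Y‖ ^ 2) ≤ 0 := by
    have := hy Y
    linarith
  have hsum0 : (‖S y - x‖ ^ 2 + α * ‖W y‖ ^ 2) - (‖S Y - x‖ ^ 2 + α * ‖W Y‖ ^ 2) = 0 :=
    le_antisymm hle (h.nonneg (hnn y))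
  have hterm0 : ∀ j, ⟪ζ j, y⟫ = (if j < k then (Real.sqrt (lam j))⁻¹
      else Real.sqrt (lam j) / (lam j + α)) * ⟪x, ζ j⟫ := by
    intro j
    have hlej := le_hasSum h j (fun i _ => hnn y i)
    rw [hsum0] at hlej
    have heq0 : (lam j + if j < k then 0 else α)
        * (⟪ζ j, y⟫ - (if j < k then (Real.sqrt (lam j))⁻¹
            else Real.sqrt (lam j) / (lam j + α)) * ⟪x, ζ j⟫) ^ 2 = 0 :=
      le_antisymm hlej (hnn y j)
    rcases mul_eq_zero.mp heq0 with h' | h'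
    · exact absurd h' (hdpos j).ne'
    · have := (pow_eq_zero_iff two_ne_zero).mp h'
      linarith [sub_eq_zero.mp this]
  have hzero : ∀ j, ⟪ζ j, y - Y⟫ = 0 := by
    intro j
    rw [inner_sub_right, Ycoord j, hterm0 j, sub_self]
  have hnorm : ‖y - Y‖ ^ 2 = 0 := by
    have h0 : HasSum (fun _ : ℕ => (0 : ℝ)) (‖y - Y‖ ^ 2) :=
      (parseval (y - Y)).congr_fun fun j => by rw [hzero j]; ring
    exact (hasSum_zero.unique h0).symm
  have : y - Y = 0 := by
    have := (pow_eq_zero_iff two_ne_zero).mp hnorm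
    exact norm_eq_zero.mp this
  exact sub_eq_zero.mp this
end

section
/- Let H be a real Hilbert space, C a compact positive self-adjoint operator on H with eigenpairs (λᵢ, ζᵢ), λ_k > λ_{k+1} > 0, W the orthogonal projection onto the complement of span{ζ₁,…,ζ_k}, and α > 0. For x ∈ H let x_st^{α,k} denote the minimizer of y ↦ ‖C^{1/2}y - x‖² + α‖W y‖². Then ‖x_st^{α,k}‖² = ∑_{i=1}^{k} λᵢ^{-1} ⟨x, ζᵢ⟩² + ∑_{i>k} (λᵢ / (λᵢ + α)²) ⟨x, ζᵢ⟩². -/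
open scoped RealInnerProductSpace

/-- The squared regularized Mahalanobis distance: if `x_st` minimizes
`y ↦ ‖C^{1/2} y - x‖² + α ‖W y‖²` (with `W` the projection onto the complement of
the first `k` eigenfunctions), then
`‖x_st‖² = ∑_{i<k} λᵢ⁻¹ ⟨x,ζᵢ⟩² + ∑_{i≥k} (λᵢ/(λᵢ+α)²) ⟨x,ζᵢ⟩²`. -/
theorem rdmd_norm_sq_formula
    {H : Type*} [NormedAddCommGroup H] [InnerProductSpace ℝ H] [CompleteSpace H]
    (C S W : H →L[ℝ] H) (hCcompact : IsCompactOperator C)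
    (hCpos : C.IsPositive) (hCsa : IsSelfAdjoint C)
    (ζ : ℕ → H) (lam : ℕ → ℝ) (k : ℕ)
    (hon : Orthonormal ℝ ζ)
    (hbasis : (Submodule.span ℝ (Set.range ζ)).topologicalClosure = ⊤)
    (heig : ∀ i, C (ζ i) = lam i • ζ i)
    (hpos : ∀ i, 0 < lam i) (hmono : Antitone lam)
    (hgap : lam (k + 1) < lam k)
    (hS : ∀ y : H, S y = ∑' i, (Real.sqrt (lam i) * ⟪ζ i, y⟫) • ζ i)
    (hW : ∀ y : H, W y = y - ∑ i ∈ Finset.range k, ⟪ζ i, y⟫ • ζ i)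
    (α : ℝ) (hα : 0 < α) (x : H) (xst : H)
    (hmin : ∀ z : H, ‖S xst - x‖ ^ 2 + α * ‖W xst‖ ^ 2
        ≤ ‖S z - x‖ ^ 2 + α * ‖W z‖ ^ 2) :
    ‖xst‖ ^ 2 = ∑' i, (if i < k then (lam i)⁻¹ else lam i / (lam i + α) ^ 2) * ⟪x, ζ i⟫ ^ 2 := by
  classical
  have hite := orthonormal_iff_ite.mp hon
  -- summability
  have hsum : ∀ y : H, Summable (fun i => (Real.sqrt (lam i) * ⟪ζ i, y⟫) • ζ i) := by
    intro y
    have h := (hon.orthogonalFamily.summable_iff_norm_sq_summable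
      (fun i => Real.sqrt (lam i) * ⟪ζ i, y⟫))
    simp only [LinearIsometry.toSpanSingleton_apply] at h
    rw [h]
    apply Summable.of_nonneg_of_le (fun i => sq_nonneg _)
      (fun i => ?_) ((hon.inner_products_summable y).mul_left (lam 0))
    have h1 : ‖Real.sqrt (lam i) * ⟪ζ i, y⟫‖ ^ 2 = lam i * ‖⟪ζ i, y⟫‖ ^ 2 := by
      rw [norm_mul, mul_pow, Real.norm_eq_abs, sq_abs, Real.sq_sqrt (hpos i).le]
    rw [h1]
    exact mul_le_mul_of_nonneg_right (hmono (Nat.zero_le i)) (sq_nonneg _)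
  -- inner of ζ j with S y
  have hinnS : ∀ (y : H) (j : ℕ), ⟪ζ j, S y⟫ = Real.sqrt (lam j) * ⟪ζ j, y⟫ := by
    intro y j
    have h1 : (innerSL ℝ (ζ j)) (S y)
        = ∑' i, (innerSL ℝ (ζ j)) ((Real.sqrt (lam i) * ⟪ζ i, y⟫) • ζ i) := by
      rw [hS y]; exact (innerSL ℝ (ζ j)).map_tsum (hsum y)
    simp only [innerSL_apply_apply] at h1
    rw [h1]
    have key : ∀ i, ⟪ζ j, (Real.sqrt (lam i) * ⟪ζ i, y⟫) • ζ i⟫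
        = if i = j then Real.sqrt (lam j) * ⟪ζ j, y⟫ else 0 := by
      intro i
      rw [inner_smul_right, hite j i]
      by_cases h : i = j
      · subst h; simp
      · rw [if_neg (fun hh => h hh.symm), mul_zero, if_neg h]
    rw [tsum_congr key, tsum_ite_eq]
  -- inner of ζ j with W y
  have hinnW : ∀ (y : H) (j : ℕ),
      ⟪ζ j, W y⟫ = ⟪ζ j, y⟫ - (if j < k then ⟪ζ j, y⟫ else 0) := by
    intro y j
    rw [hW y, inner_sub_right, inner_sum]
    congr 1
    have key : ∀ i ∈ Finset.range k, ⟪ζ j, ⟪ζ i, y⟫ • ζ i⟫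
        = if i = j then ⟪ζ j, y⟫ else 0 := by
      intro i _
      rw [inner_smul_right, hite j i]
      by_cases h : i = j
      · subst h; simp
      · rw [if_neg (fun hh => h hh.symm), mul_zero, if_neg h]
    rw [Finset.sum_congr rfl key]; simp only [Finset.sum_ite_eq', Finset.mem_range]
  -- S on basis vectors
  have hSζ : ∀ j, S (ζ j) = Real.sqrt (lam j) • ζ j := by
    intro j
    rw [hS (ζ j)]
    have key : ∀ i, (Real.sqrt (lam i) * ⟪ζ i, ζ j⟫) • ζ i
        = if i = j then Real.sqrt (lam j) • ζ j else 0 := by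
      intro i
      rw [hite i j]
      by_cases h : i = j
      · subst h; simp
      · rw [if_neg h, mul_zero, zero_smul, if_neg h]
    rw [tsum_congr key, tsum_ite_eq]
  -- W on basis vectors
  have hWζ : ∀ j, W (ζ j) = ζ j - (if j < k then ζ j else 0) := by
    intro j
    rw [hW (ζ j)]
    congr 1
    have key : ∀ i ∈ Finset.range k, ⟪ζ i, ζ j⟫ • ζ i
        = if i = j then ζ j else 0 := by
      intro i _
      rw [hite i j]
      by_cases h : i = j
      · subst h; simp
      · rw [if_neg h, zero_smul, if_neg h]
    rw [Finset.sum_congr rfl key]; simp only [Finset.sum_ite_eq', Finset.mem_range]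
  -- Euler-Lagrange equation
  have euler : ∀ h : H, ⟪S xst - x, S h⟫ + α * ⟪W xst, W h⟫ = 0 := by
    intro h
    set a : ℝ := ⟪S xst - x, S h⟫ + α * ⟪W xst, W h⟫ with ha
    set b : ℝ := ‖S h‖ ^ 2 + α * ‖W h‖ ^ 2 with hb
    have hb0 : 0 ≤ b := by positivity
    have key : ∀ t : ℝ, 0 ≤ 2 * t * a + t ^ 2 * b := by
      intro t
      have h1 := hmin (xst + t • h)
      have e1 : S (xst + t • h) - x = (S xst - x) + t • S h := by
        rw [map_add, map_smul]; abel
      have e2 : W (xst + t • h) = W xst + t • W h := by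
        rw [map_add, map_smul]
      rw [e1, e2, norm_add_sq_real, norm_add_sq_real] at h1
      simp only [inner_smul_right, norm_smul, Real.norm_eq_abs] at h1
      have habs : (|t| * ‖S h‖) ^ 2 = t ^ 2 * ‖S h‖ ^ 2 := by rw [mul_pow, sq_abs]
      have habs2 : (|t| * ‖W h‖) ^ 2 = t ^ 2 * ‖W h‖ ^ 2 := by rw [mul_pow, sq_abs]
      rw [habs, habs2] at h1
      simp only [ha, hb]
      nlinarith [h1]
    set t : ℝ := -a / (b + 1) with ht
    have hb1 : (0:ℝ) < b + 1 := by linarith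
    have h5 : 0 ≤ (2 * t * a + t ^ 2 * b) * (b + 1) ^ 2 :=
      mul_nonneg (key t) (sq_nonneg _)
    have h6 : (2 * t * a + t ^ 2 * b) * (b + 1) ^ 2 = -(a ^ 2) * (b + 2) := by
      rw [ht]; field_simp; ring
    rw [h6] at h5
    have ha2 : a ^ 2 = 0 := by nlinarith [sq_nonneg a]
    exact sq_eq_zero_iff.mp ha2
  -- coefficient equations
  set c : ℕ → ℝ := fun j => ⟪ζ j, xst⟫ with hc
  have coeff : ∀ j, Real.sqrt (lam j) * (Real.sqrt (lam j) * c j - ⟪ζ j, x⟫)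
      + α * (if j < k then 0 else c j) = 0 := by
    intro j
    have h := euler (ζ j)
    rw [hSζ j, hWζ j, inner_smul_right, real_inner_comm (ζ j) (S xst - x),
      inner_sub_right, hinnS] at h
    by_cases hj : j < k
    · rw [if_pos hj, sub_self, inner_zero_right, mul_zero, add_zero] at h
      rw [if_pos hj, mul_zero, add_zero]
      exact h
    · rw [if_neg hj, sub_zero, real_inner_comm (ζ j) (W xst), hinnW xst j,
        if_neg hj, sub_zero] at h
      rw [if_neg hj]
      exact h
  -- Parseval
  have hble : (⊤ : Submodule ℝ H) ≤ (Submodule.span ℝ (Set.range ζ)).topologicalClosure :=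
    le_of_eq hbasis.symm
  set b : HilbertBasis ℕ ℝ H := HilbertBasis.mk hon hble with hbdef
  have hbcoe : ∀ i, b i = ζ i := fun i => congrFun (HilbertBasis.coe_mk hon hble) i
  have parseval : ‖xst‖ ^ 2 = ∑' i, (c i) ^ 2 := by
    have h := b.tsum_inner_mul_inner xst xst
    rw [real_inner_self_eq_norm_sq] at h
    rw [← h]
    apply tsum_congr
    intro i
    rw [hbcoe i, real_inner_comm (ζ i) xst, sq]
  rw [parseval]
  apply tsum_congr
  intro j
  have hcj := coeff j
  have hl := hpos j
  have hsq : Real.sqrt (lam j) * Real.sqrt (lam j) = lam j := Real.mul_self_sqrt hl.le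
  have hxsym : ⟪x, ζ j⟫ = ⟪ζ j, x⟫ := real_inner_comm (ζ j) x
  by_cases hj : j < k
  · rw [if_pos hj, mul_zero, add_zero] at hcj
    rw [if_pos hj, hxsym]
    have hs : (0:ℝ) < Real.sqrt (lam j) := Real.sqrt_pos.mpr hl
    have h2 : Real.sqrt (lam j) * c j = ⟪ζ j, x⟫ := by
      rcases mul_eq_zero.mp hcj with h | h
      · linarith
      · linarith
    have h3 : (Real.sqrt (lam j) * c j) ^ 2 = ⟪ζ j, x⟫ ^ 2 := by rw [h2]
    rw [mul_pow, Real.sq_sqrt hl.le] at h3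
    field_simp
    linarith [h3]
  · rw [if_neg hj] at hcj
    rw [if_neg hj, hxsym]
    have h2 : (lam j + α) * c j = Real.sqrt (lam j) * ⟪ζ j, x⟫ := by
      linear_combination hcj - c j * hsq
    have h3 : ((lam j + α) * c j) ^ 2 = (Real.sqrt (lam j) * ⟪ζ j, x⟫) ^ 2 := by rw [h2]
    rw [mul_pow, mul_pow, Real.sq_sqrt hl.le] at h3
    have hla : (0:ℝ) < lam j + α := by linarith
    field_simp
    linarith [h3]
end
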